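/- The quandle R̃_{2n+1} = (G_{2n+1}, C(a), a) is not involutory for any n ≥ 1: specifically (Ha ◁ Hb) ◁ Hb ≠ Ha, because b⁻¹ a² b = diag(−1, 1, −1, −1, …, −1) (the diagonal sign matrix with +1 only in position 2) does not lie in H = C(a). In particular R̃_{2n+1} is not isomorphic to any dihedral quandle R_m. -/

import Mathlib

open Matrix


/-- The signed permutation matrix `a = (1, 2n+1, 2n, …, n+2, −(n+1), …, −3, −2)`
(column `j` is `ε_j e_{σ(j)}`), written with 0-based indices. -/
def Amat (n : ℕ) : Matrix (Fin (2*n+1)) (Fin (2*n+1)) ℤ := fun i j =>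
  if (j : ℕ) = 0 then (if (i : ℕ) = 0 then 1 else 0)
  else if (i : ℕ) = 2*n+1 - (j : ℕ) then (if (j : ℕ) ≤ n then 1 else -1) else 0

/-- The cyclic permutation matrix `b = (2n+1, 1, 2, …, 2n)`, with 0-based indices:
column `j` is `e_{j-1 (mod 2n+1)}`. -/
def Bmat (n : ℕ) : Matrix (Fin (2*n+1)) (Fin (2*n+1)) ℤ := fun i j =>
  if i = j - 1 then 1 else 0

/-- The group `G_{2n+1}` generated by `a` and `b`. -/
def Gp (n : ℕ) (a b : Matrix.SpecialLinearGroup (Fin (2*n+1)) ℤ) :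
    Subgroup (Matrix.SpecialLinearGroup (Fin (2*n+1)) ℤ) :=
  Subgroup.closure {a, b}

theorem mem_a (n : ℕ) (a b : Matrix.SpecialLinearGroup (Fin (2*n+1)) ℤ) : a ∈ Gp n a b :=
  Subgroup.subset_closure (Set.mem_insert _ _)

theorem mem_b (n : ℕ) (a b : Matrix.SpecialLinearGroup (Fin (2*n+1)) ℤ) : b ∈ Gp n a b :=
  Subgroup.subset_closure (Set.mem_insert_of_mem _ rfl)

/-- The subgroup `H = C(a)` of `G_{2n+1}`. -/
def Hc (n : ℕ) (a b : Matrix.SpecialLinearGroup (Fin (2*n+1)) ℤ) : Subgroup ↥(Gp n a b) :=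
  (Subgroup.centralizer {a}).subgroupOf (Gp n a b)

lemma Amat_sq (n : ℕ) : Amat n * Amat n =
    Matrix.of (fun i j : Fin (2*n+1) => if i = j then (if (i : ℕ) = 0 then 1 else -1) else 0) := by
  ext i j
  rw [Matrix.mul_apply]
  by_cases hj : (j : ℕ) = 0
  · have hj0 : j = 0 := by
      apply Fin.ext; simpa using hj
    subst hj0
    rw [Finset.sum_eq_single (0 : Fin (2*n+1))]
    · by_cases hi : (i : ℕ) = 0
      · have : i = 0 := by apply Fin.ext; simpa using hi
        simp [Amat, this]
      · have : ¬ i = 0 := by rintro rfl; exact hi (by simp)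
        simp [Amat, hi, this]
    · intro k _ hk
      have hk' : (k : ℕ) ≠ 0 := fun h => hk (Fin.ext (by simp [h]))
      simp [Amat, hk']
    · simp
  · have hjlt : (j : ℕ) < 2*n+1 := j.isLt
    set k₀ : Fin (2*n+1) := ⟨2*n+1 - (j : ℕ), by omega⟩ with hk₀
    have hk₀v : (k₀ : ℕ) = 2*n+1 - (j : ℕ) := rfl
    rw [Finset.sum_eq_single k₀]
    · have h1 : Amat n k₀ j = (if (j : ℕ) ≤ n then 1 else -1) := by
        simp [Amat, hj, hk₀v]
      have hk₀ne : (k₀ : ℕ) ≠ 0 := by omega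
      have h2 : Amat n i k₀ = if i = j then (if 2*n+1 - (j : ℕ) ≤ n then 1 else -1) else 0 := by
        simp only [Amat]
        rw [if_neg hk₀ne]
        have h3 : 2*n+1 - (k₀ : ℕ) = (j : ℕ) := by omega
        simp [h3, Fin.ext_iff, hk₀v, Nat.sub_sub_self hjlt.le]
      rw [h1, h2]
      by_cases hij : i = j
      · subst hij
        have hi0 : ¬((i : ℕ) = 0) := hj
        rcases le_or_gt (i : ℕ) n with hle | hlt
        · have h4 : ¬(2*n+1 - (i : ℕ) ≤ n) := by omega
          simp [hle, h4, hi0, show ¬ i = 0 from by rintro rfl; exact hi0 (by simp)]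
        · have h4 : 2*n+1 - (i : ℕ) ≤ n := by omega
          have h5 : ¬((i : ℕ) ≤ n) := by omega
          simp [h4, h5, hi0, show ¬ i = 0 from by rintro rfl; exact hi0 (by simp)]
      · simp [hij]
    · intro k _ hk
      have hk' : (k : ℕ) ≠ 2*n+1 - (j : ℕ) := by
        simpa [Fin.ext_iff, hk₀v] using hk
      simp [Amat, hj, hk']
    · simp

lemma BtB (n : ℕ) : (Bmat n)ᵀ * Bmat n = 1 := by
  ext i j
  rw [Matrix.mul_apply]
  rw [Finset.sum_eq_single (i - 1)]
  · simp [Bmat, Matrix.transpose_apply, Matrix.one_apply, sub_left_inj]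
  · intro k _ hk
    simp [Bmat, Matrix.transpose_apply, hk]
  · simp

lemma BD (n : ℕ) (hn : 0 < n) :
    Bmat n * Matrix.of (fun i j : Fin (2*n+1) =>
        if i = j then (if (i : ℕ) = 1 then 1 else -1) else 0)
      = Matrix.of (fun i j : Fin (2*n+1) =>
        if i = j then (if (i : ℕ) = 0 then 1 else -1) else 0) * Bmat n := by
  have hone : ((1 : Fin (2*n+1)) : ℕ) = 1 := by
    rw [Fin.val_one']; exact Nat.mod_eq_of_lt (by omega)
  ext i j
  rw [Matrix.mul_apply, Matrix.mul_apply]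
  rw [Finset.sum_eq_single j, Finset.sum_eq_single (j - 1)]
  · simp only [Bmat, Matrix.of_apply, eq_self_iff_true, if_true]
    by_cases hij : i = j - 1
    · subst hij
      rw [if_pos rfl, if_pos rfl]
      have h1 : ((j : Fin (2*n+1)) : ℕ) = 1 ↔ j - 1 = 0 := by
        rw [sub_eq_zero, Fin.ext_iff, hone]
      have h2 : ((j - 1 : Fin (2*n+1)) : ℕ) = 0 ↔ j - 1 = 0 := by
        exact ⟨fun h => Fin.ext (by simp [h]), fun h => by rw [h]; simp⟩
      by_cases hc : j - 1 = 0
      · rw [if_pos (h1.mpr hc), if_pos (h2.mpr hc)]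
      · rw [if_neg (fun h => hc (h1.mp h)), if_neg (fun h => hc (h2.mp h))]; ring
    · rw [if_neg hij, if_neg hij]; ring
  · intro k _ hk
    simp [Bmat, hk]
  · simp
  · intro k _ hk
    simp [Matrix.of_apply, if_neg hk]
  · simp

/-- `R̃_{2n+1}` is not involutory: `b⁻¹ a² b` is the diagonal sign matrix with `+1`
only in position 2 (0-based index 1), it does not lie in `H = C(a)`, and hence
`(Ha ◁ Hb) ◁ Hb ≠ Ha`, where `Hu ◁ Hv = H u v⁻¹ a v`.  In particular `R̃_{2n+1}` is not
isomorphic to any dihedral quandle `R_m`. -/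
theorem tilde_R_not_involutory (n : ℕ) (hn : 0 < n)
    (a b : Matrix.SpecialLinearGroup (Fin (2*n+1)) ℤ)
    (ha : (a : Matrix (Fin (2*n+1)) (Fin (2*n+1)) ℤ) = Amat n)
    (hb : (b : Matrix (Fin (2*n+1)) (Fin (2*n+1)) ℤ) = Bmat n) :
    (((b⁻¹ * a^2 * b : Matrix.SpecialLinearGroup (Fin (2*n+1)) ℤ) :
        Matrix (Fin (2*n+1)) (Fin (2*n+1)) ℤ)
      = Matrix.of fun i j : Fin (2*n+1) => if i = j then (if (i : ℕ) = 1 then 1 else -1) else 0) ∧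
    b⁻¹ * a^2 * b ∉ Subgroup.centralizer {a} ∧
    (Quotient.mk (QuotientGroup.rightRel (Hc n a b))
        ((⟨a, mem_a n a b⟩ * ⟨b, mem_b n a b⟩⁻¹ * ⟨a, mem_a n a b⟩ * ⟨b, mem_b n a b⟩)
          * ⟨b, mem_b n a b⟩⁻¹ * ⟨a, mem_a n a b⟩ * ⟨b, mem_b n a b⟩)
      ≠ Quotient.mk (QuotientGroup.rightRel (Hc n a b)) ⟨a, mem_a n a b⟩) ∧
    ¬ ∃ (m : ℕ) (e : Quotient (QuotientGroup.rightRel (Hc n a b)) ≃ ZMod m),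
        ∀ u v : ↥(Gp n a b),
          e (Quotient.mk (QuotientGroup.rightRel (Hc n a b))
              (u * v⁻¹ * ⟨a, mem_a n a b⟩ * v))
            = 2 * e (Quotient.mk (QuotientGroup.rightRel (Hc n a b)) v)
              - e (Quotient.mk (QuotientGroup.rightRel (Hc n a b)) u) := by
  set D : Matrix (Fin (2*n+1)) (Fin (2*n+1)) ℤ :=
    Matrix.of (fun i j : Fin (2*n+1) => if i = j then (if (i : ℕ) = 1 then 1 else -1) else 0)
    with hD
  have hbb : b * (b⁻¹ * a^2 * b) = a^2 * b := by group
  have hM : Bmat n * ((b⁻¹ * a^2 * b : Matrix.SpecialLinearGroup (Fin (2*n+1)) ℤ) :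
      Matrix (Fin (2*n+1)) (Fin (2*n+1)) ℤ) = Amat n * Amat n * Bmat n := by
    calc Bmat n * (↑(b⁻¹ * a^2 * b) : Matrix (Fin (2*n+1)) (Fin (2*n+1)) ℤ)
        = (↑b : Matrix (Fin (2*n+1)) (Fin (2*n+1)) ℤ) * ↑(b⁻¹ * a^2 * b) := by rw [hb]
      _ = (↑(b * (b⁻¹ * a^2 * b)) : Matrix (Fin (2*n+1)) (Fin (2*n+1)) ℤ) :=
          (Matrix.SpecialLinearGroup.coe_mul _ _).symm
      _ = (↑(a^2 * b) : Matrix (Fin (2*n+1)) (Fin (2*n+1)) ℤ) := by rw [hbb]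
      _ = (↑(a^2) : Matrix (Fin (2*n+1)) (Fin (2*n+1)) ℤ) * ↑b :=
          Matrix.SpecialLinearGroup.coe_mul _ _
      _ = ((↑a : Matrix (Fin (2*n+1)) (Fin (2*n+1)) ℤ) * ↑a) * ↑b := by
          rw [pow_two, Matrix.SpecialLinearGroup.coe_mul]
      _ = Amat n * Amat n * Bmat n := by rw [ha, hb]
  have c1 : ((b⁻¹ * a^2 * b : Matrix.SpecialLinearGroup (Fin (2*n+1)) ℤ) :
      Matrix (Fin (2*n+1)) (Fin (2*n+1)) ℤ) = D := by
    have hbd := BD n hn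
    rw [← hD] at hbd
    rw [← Amat_sq n] at hbd
    calc ((b⁻¹ * a^2 * b : Matrix.SpecialLinearGroup (Fin (2*n+1)) ℤ) :
          Matrix (Fin (2*n+1)) (Fin (2*n+1)) ℤ)
        = 1 * ↑(b⁻¹ * a^2 * b) := (one_mul _).symm
      _ = ((Bmat n)ᵀ * Bmat n) * ↑(b⁻¹ * a^2 * b) := by rw [BtB]
      _ = (Bmat n)ᵀ * (Bmat n * ↑(b⁻¹ * a^2 * b)) := by rw [Matrix.mul_assoc]
      _ = (Bmat n)ᵀ * (Bmat n * D) := by rw [hM, hbd]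
      _ = ((Bmat n)ᵀ * Bmat n) * D := by rw [Matrix.mul_assoc]
      _ = D := by rw [BtB, one_mul]
  have haC : a ∈ Subgroup.centralizer {a} := by
    rw [Subgroup.mem_centralizer_iff]
    rintro h hh
    rw [Set.mem_singleton_iff] at hh
    rw [hh]
  have c2 : b⁻¹ * a^2 * b ∉ Subgroup.centralizer {a} := by
    intro hc
    have hcomm := Subgroup.mem_centralizer_iff.mp hc a (Set.mem_singleton a)
    have hmat : Amat n * D = D * Amat n := by
      have hh := congrArg
        (fun m : Matrix.SpecialLinearGroup (Fin (2*n+1)) ℤ =>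
          (m : Matrix (Fin (2*n+1)) (Fin (2*n+1)) ℤ)) hcomm
      simpa only [Matrix.SpecialLinearGroup.coe_mul, ha, c1] using hh
    have ilt : (1 : ℕ) < 2*n+1 := by omega
    have jlt : 2*n < 2*n+1 := by omega
    set i : Fin (2*n+1) := ⟨1, ilt⟩ with hi_def
    set j : Fin (2*n+1) := ⟨2*n, jlt⟩ with hj_def
    have hiv : (i : ℕ) = 1 := rfl
    have hjv : (j : ℕ) = 2*n := rfl
    have hAij : Amat n i j = -1 := by
      simp only [Amat, hiv, hjv]
      rw [if_neg (by omega), if_pos (by omega), if_neg (by omega)]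
    have hDjj : D j j = -1 := by
      show (if j = j then (if (j : ℕ) = 1 then 1 else -1) else 0) = -1
      rw [if_pos rfl, if_neg (show ¬((j : ℕ) = 1) by omega)]
    have hDii : D i i = 1 := by
      show (if i = i then (if (i : ℕ) = 1 then 1 else -1) else 0) = 1
      rw [if_pos rfl, if_pos hiv]
    have hL : (Amat n * D) i j = 1 := by
      rw [Matrix.mul_apply, Finset.sum_eq_single j]
      · rw [hAij, hDjj]; norm_num
      · intro k _ hk
        simp [hD, hk]
      · simp
    have hR : (D * Amat n) i j = -1 := by
      rw [Matrix.mul_apply, Finset.sum_eq_single i]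
      · rw [hDii, hAij]; norm_num
      · intro k _ hk
        have : ¬ i = k := fun h => hk h.symm
        simp [hD, this]
      · simp
    rw [hmat, hR] at hL
    exact absurd hL (by norm_num)
  have c3 : (Quotient.mk (QuotientGroup.rightRel (Hc n a b))
        ((⟨a, mem_a n a b⟩ * ⟨b, mem_b n a b⟩⁻¹ * ⟨a, mem_a n a b⟩ * ⟨b, mem_b n a b⟩)
          * ⟨b, mem_b n a b⟩⁻¹ * ⟨a, mem_a n a b⟩ * ⟨b, mem_b n a b⟩)
      ≠ Quotient.mk (QuotientGroup.rightRel (Hc n a b)) ⟨a, mem_a n a b⟩) := by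
    intro h
    have h' := Quotient.exact h
    have hm := QuotientGroup.rightRel_apply.mp h'
    rw [Hc, Subgroup.mem_subgroupOf] at hm
    have hm' : a * (a * b⁻¹ * a * b * b⁻¹ * a * b)⁻¹ ∈ Subgroup.centralizer {a} := hm
    have e1 : a * (a * b⁻¹ * a * b * b⁻¹ * a * b)⁻¹ = a * (b⁻¹ * a^2 * b)⁻¹ * a⁻¹ := by
      group
    rw [e1] at hm'
    have m2 := (mul_mem_cancel_right (inv_mem haC)).mp hm'
    have m3 := (mul_mem_cancel_left haC).mp m2
    exact c2 (inv_mem_iff.mp m3)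
  refine ⟨c1, c2, c3, ?_⟩
  rintro ⟨m, e, he⟩
  have h1 := he ⟨a, mem_a n a b⟩ ⟨b, mem_b n a b⟩
  have h2 := he (⟨a, mem_a n a b⟩ * ⟨b, mem_b n a b⟩⁻¹ * ⟨a, mem_a n a b⟩ * ⟨b, mem_b n a b⟩)
    ⟨b, mem_b n a b⟩
  apply c3
  apply e.injective
  rw [h2, h1]
  ring
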